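/- For a radial function f on ℝ² (identified with f(r) on (0,∞)) with f and r f'(r) in L^p with respect to the measure r dr, one has ‖f‖_{L^p} ≤ C ‖r f_r‖_{L^p} for 1 ≤ p < ∞, provided f(r) → 0 as r → ∞. -/

import Mathlib

open MeasureTheory Set
open scoped ENNReal NNReal

lemma swapE (H : ℝ → ℝ≥0∞) (hH : Measurable H) :
    ∫⁻ r in Set.Ioi (0:ℝ), ∫⁻ s in Set.Ioi r, H s =
      ∫⁻ s in Set.Ioi (0:ℝ), H s * ENNReal.ofReal s := by
  have key : ∀ r : ℝ, ∫⁻ s in Set.Ioi r, H s = ∫⁻ s, (Set.Ioi r).indicator H s := by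
    intro r; rw [lintegral_indicator measurableSet_Ioi]
  calc ∫⁻ r in Set.Ioi (0:ℝ), ∫⁻ s in Set.Ioi r, H s
      = ∫⁻ r in Set.Ioi (0:ℝ), ∫⁻ s, (Set.Ioi r).indicator H s := by simp_rw [key]
    _ = ∫⁻ s, ∫⁻ r in Set.Ioi (0:ℝ), (Set.Ioi r).indicator H s := by
        refine lintegral_lintegral_swap ?_
        have : Measurable fun z : ℝ × ℝ => {q : ℝ × ℝ | q.1 < q.2}.indicator
            (fun q => H q.2) z := by
          exact (hH.comp measurable_snd).indicator (measurableSet_lt measurable_fst measurable_snd)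
        refine this.aemeasurable.congr (Filter.EventuallyEq.of_eq ?_)
        funext z
        simp only [Function.uncurry, Set.indicator, Set.mem_Ioi, Set.mem_setOf_eq]
    _ = ∫⁻ s, H s * (volume.restrict (Set.Ioi (0:ℝ))) (Set.Iio s) := by
        congr 1; funext s
        have : ∀ r : ℝ, (Set.Ioi r).indicator H s = (Set.Iio s).indicator (fun _ => H s) r := by
          intro r; simp only [Set.indicator, Set.mem_Ioi, Set.mem_Iio]
        simp_rw [this]
        rw [lintegral_indicator_const measurableSet_Iio]
    _ = ∫⁻ s, H s * ENNReal.ofReal s := by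
        congr 1; funext s
        rw [Measure.restrict_apply measurableSet_Iio, show Set.Iio s ∩ Set.Ioi 0 = Set.Ioo 0 s by
          ext x; simp [Set.mem_Ioo, and_comm], Real.volume_Ioo, sub_zero]
    _ = ∫⁻ s in Set.Ioi (0:ℝ), H s * ENNReal.ofReal s := by
        rw [← lintegral_indicator measurableSet_Ioi]
        congr 1; funext s
        by_cases hs : 0 < s
        · simp [Set.indicator_of_mem, hs]
        · simp [Set.indicator_of_notMem, hs, ENNReal.ofReal_eq_zero.2 (le_of_not_gt hs)]

lemma hardyE (p : ℝ) (hp1 : 1 ≤ p) :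
    ∃ K : ℝ≥0∞, K ≠ 0 ∧ K ≠ ⊤ ∧ ∀ g : ℝ → ℝ≥0∞, Measurable g →
      ∫⁻ r in Set.Ioi (0:ℝ), (∫⁻ s in Set.Ioi r, g s) ^ p * ENNReal.ofReal r ≤
        K * ∫⁻ s in Set.Ioi (0:ℝ), (g s * ENNReal.ofReal s) ^ p * ENNReal.ofReal s := by
  rcases eq_or_lt_of_le hp1 with hp | hp
  · -- p = 1
    subst hp
    refine ⟨1, one_ne_zero, ENNReal.one_ne_top, fun g hg => ?_⟩
    rw [one_mul]
    simp only [ENNReal.rpow_one]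
    have step : ∀ r ∈ Set.Ioi (0:ℝ),
        (∫⁻ s in Set.Ioi r, g s) * ENNReal.ofReal r ≤
          ∫⁻ s in Set.Ioi r, g s * ENNReal.ofReal s := by
      intro r _
      rw [← lintegral_mul_const _ hg]
      refine setLIntegral_mono (hg.mul (ENNReal.measurable_ofReal.comp measurable_id)) (fun s hs => ?_)
      exact mul_le_mul_right (ENNReal.ofReal_le_ofReal (le_of_lt hs)) _
    calc ∫⁻ r in Set.Ioi (0:ℝ), (∫⁻ s in Set.Ioi r, g s) * ENNReal.ofReal r
        ≤ ∫⁻ r in Set.Ioi (0:ℝ), ∫⁻ s in Set.Ioi r, g s * ENNReal.ofReal s := by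
          refine setLIntegral_mono ?_ step
          have anti : Antitone fun r : ℝ => ∫⁻ s in Set.Ioi r, g s * ENNReal.ofReal s :=
            fun a b hab => lintegral_mono' (Measure.restrict_mono (Set.Ioi_subset_Ioi hab) le_rfl)
              le_rfl
          exact anti.measurable
      _ = ∫⁻ s in Set.Ioi (0:ℝ), (g s * ENNReal.ofReal s) * ENNReal.ofReal s :=
          swapE _ (hg.mul (ENNReal.measurable_ofReal.comp measurable_id))
  · -- p > 1
    set q := p / (p - 1) with hq_def
    have hpq : p.HolderConjugate q := Real.HolderConjugate.conjExponent hp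
    have hq1 : 1 < q := hpq.symm.lt
    have hq0 : 0 < q - 1 := by linarith
    have hpq' : p / q = p - 1 := hpq.div_conj_eq_sub_one
    set K : ℝ≥0∞ := ENNReal.ofReal ((q - 1)⁻¹ ^ (p / q)) with hK_def
    have hKpos : (0:ℝ) < (q - 1)⁻¹ ^ (p / q) := Real.rpow_pos_of_pos (by positivity) _
    refine ⟨K, (ENNReal.ofReal_pos.2 hKpos).ne', ENNReal.ofReal_ne_top, fun g hg => ?_⟩
    set H : ℝ → ℝ≥0∞ := fun s => (g s * ENNReal.ofReal s) ^ p with hH_def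
    have hHmeas : Measurable H := (hg.mul ENNReal.measurable_ofReal).pow_const p
    -- pointwise bound
    have step : ∀ r ∈ Set.Ioi (0:ℝ),
        (∫⁻ s in Set.Ioi r, g s) ^ p * ENNReal.ofReal r ≤
          (∫⁻ s in Set.Ioi r, H s) * K := by
      intro r hr
      rw [Set.mem_Ioi] at hr
      set T : ℝ := r ^ (1 - q) / (q - 1) with hT_def
      have hTpos : 0 < T := by
        apply div_pos (Real.rpow_pos_of_pos hr _) hq0
      -- Hölder
      have holder : (∫⁻ s in Set.Ioi r, g s) ≤
          (∫⁻ s in Set.Ioi r, H s) ^ (1/p) * (ENNReal.ofReal T) ^ (1/q) := by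
        have tail : ∫⁻ s in Set.Ioi r, (ENNReal.ofReal s⁻¹) ^ q = ENNReal.ofReal T := by
          have e1 : ∀ s ∈ Set.Ioi r, (ENNReal.ofReal s⁻¹) ^ q = ENNReal.ofReal (s ^ (-q)) := by
            intro s hs
            rw [Set.mem_Ioi] at hs
            have hs0 : 0 < s := hr.trans hs
            rw [ENNReal.ofReal_rpow_of_pos (by positivity : (0:ℝ) < s⁻¹),
              Real.inv_rpow hs0.le, ← Real.rpow_neg hs0.le]
          rw [setLIntegral_congr_fun measurableSet_Ioi e1]
          rw [← ofReal_integral_eq_lintegral_ofReal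
            (integrableOn_Ioi_rpow_of_lt (by linarith) hr)
            ((ae_restrict_iff' measurableSet_Ioi).2 (Filter.Eventually.of_forall
              fun s hs => Real.rpow_nonneg (le_of_lt (hr.trans hs)) _))]
          rw [integral_Ioi_rpow_of_lt (by linarith) hr]
          congr 1
          rw [hT_def, show (-q + 1 : ℝ) = 1 - q by ring,
            div_eq_div_iff (by linarith : (1:ℝ) - q ≠ 0) (by linarith : q - 1 ≠ 0)]
          ring
        calc (∫⁻ s in Set.Ioi r, g s)
            = ∫⁻ s in Set.Ioi r,
                ((fun s => g s * ENNReal.ofReal s) * fun s => ENNReal.ofReal s⁻¹) s := by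
              refine (setLIntegral_congr_fun measurableSet_Ioi
                (fun s hs => ?_)).symm
              rw [Set.mem_Ioi] at hs
              have hs0 : 0 < s := hr.trans hs
              show g s * ENNReal.ofReal s * ENNReal.ofReal s⁻¹ = g s
              rw [mul_assoc, ← ENNReal.ofReal_mul hs0.le, mul_inv_cancel₀ hs0.ne',
                ENNReal.ofReal_one, mul_one]
          _ ≤ (∫⁻ s in Set.Ioi r, (g s * ENNReal.ofReal s) ^ p) ^ (1/p) *
                (∫⁻ s in Set.Ioi r, (ENNReal.ofReal s⁻¹) ^ q) ^ (1/q) :=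
              ENNReal.lintegral_mul_le_Lp_mul_Lq _ hpq
                (hg.mul ENNReal.measurable_ofReal).aemeasurable
                (ENNReal.measurable_ofReal.comp measurable_inv).aemeasurable
          _ = (∫⁻ s in Set.Ioi r, H s) ^ (1/p) * (ENNReal.ofReal T) ^ (1/q) := by
              rw [tail]
      -- raise to p-th power and multiply by r
      calc (∫⁻ s in Set.Ioi r, g s) ^ p * ENNReal.ofReal r
          ≤ ((∫⁻ s in Set.Ioi r, H s) ^ (1/p) * (ENNReal.ofReal T) ^ (1/q)) ^ p
              * ENNReal.ofReal r := by
            exact mul_le_mul_left (ENNReal.rpow_le_rpow holder (by positivity)) _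
        _ = (∫⁻ s in Set.Ioi r, H s) * ((ENNReal.ofReal T) ^ (p/q) * ENNReal.ofReal r) := by
            rw [ENNReal.mul_rpow_of_nonneg _ _ (by positivity : (0:ℝ) ≤ p),
              ← ENNReal.rpow_mul, ← ENNReal.rpow_mul, one_div,
              inv_mul_cancel₀ (by positivity : p ≠ 0), ENNReal.rpow_one,
              one_div, mul_comm q⁻¹ p, ← div_eq_mul_inv, mul_assoc]
        _ = (∫⁻ s in Set.Ioi r, H s) * K := by
            congr 1
            have hexp : (1 - q) * (p / q) = -1 := by
              have hp1' : p - 1 ≠ 0 := by linarith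
              rw [hpq', hq_def, sub_mul, one_mul, div_mul_cancel₀ _ hp1']
              ring
            rw [ENNReal.ofReal_rpow_of_pos hTpos,
              ← ENNReal.ofReal_mul (Real.rpow_nonneg hTpos.le _)]
            congr 1
            rw [hT_def, Real.div_rpow (Real.rpow_nonneg hr.le _) hq0.le,
              ← Real.rpow_mul hr.le, hexp, Real.rpow_neg_one, Real.inv_rpow hq0.le]
            field_simp
      -- conclude
    calc ∫⁻ r in Set.Ioi (0:ℝ), (∫⁻ s in Set.Ioi r, g s) ^ p * ENNReal.ofReal r
        ≤ ∫⁻ r in Set.Ioi (0:ℝ), (∫⁻ s in Set.Ioi r, H s) * K := by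
          refine setLIntegral_mono ?_ step
          have anti : Antitone fun r : ℝ => ∫⁻ s in Set.Ioi r, H s :=
            fun a b hab => lintegral_mono' (Measure.restrict_mono (Set.Ioi_subset_Ioi hab) le_rfl)
              le_rfl
          exact anti.measurable.mul_const K
      _ = (∫⁻ r in Set.Ioi (0:ℝ), ∫⁻ s in Set.Ioi r, H s) * K := by
          have anti : Antitone fun r : ℝ => ∫⁻ s in Set.Ioi r, H s :=
            fun a b hab => lintegral_mono' (Measure.restrict_mono (Set.Ioi_subset_Ioi hab) le_rfl)
              le_rfl
          exact lintegral_mul_const K anti.measurable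
      _ = (∫⁻ s in Set.Ioi (0:ℝ), H s * ENNReal.ofReal s) * K := by rw [swapE H hHmeas]
      _ = K * ∫⁻ s in Set.Ioi (0:ℝ), (g s * ENNReal.ofReal s) ^ p * ENNReal.ofReal s :=
          mul_comm _ _

theorem stmt2 (p : ℝ) (hp1 : 1 ≤ p) :
    ∃ C > 0, ∀ f : ℝ → ℝ,
      (∀ r ∈ Set.Ioi (0:ℝ), DifferentiableAt ℝ f r) →
      IntegrableOn (fun r => |f r| ^ p * r) (Set.Ioi 0) →
      IntegrableOn (fun r => |r * deriv f r| ^ p * r) (Set.Ioi 0) →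
      Filter.Tendsto f Filter.atTop (nhds 0) →
      (∫ r in Set.Ioi (0:ℝ), |f r| ^ p * r) ^ (1/p) ≤
        C * (∫ r in Set.Ioi (0:ℝ), |r * deriv f r| ^ p * r) ^ (1/p) := by
  have hp0 : 0 < p := lt_of_lt_of_le one_pos hp1
  obtain ⟨K, hK0, hKtop, hK⟩ := hardyE p hp1
  refine ⟨(K.toReal + 1) ^ (1/p), Real.rpow_pos_of_pos (by positivity) _, ?_⟩
  intro f hdiff hint1 hint2 hlim
  set g : ℝ → ℝ≥0∞ := fun s => ENNReal.ofReal |deriv f s| with hg_def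
  have hgmeas : Measurable g := ENNReal.measurable_ofReal.comp (measurable_deriv f).abs
  -- pointwise bound by the tail integral of |f'|
  have ptwise : ∀ r ∈ Set.Ioi (0:ℝ), ENNReal.ofReal |f r| ≤ ∫⁻ s in Set.Ioi r, g s := by
    intro r hr
    rw [Set.mem_Ioi] at hr
    by_cases hF : (∫⁻ s in Set.Ioi r, g s) = ⊤
    · rw [hF]; exact le_top
    have hInt : IntegrableOn (deriv f) (Set.Ioi r) := by
      refine ⟨(measurable_deriv f).aestronglyMeasurable, ?_⟩
      have : ∫⁻ s in Set.Ioi r, (‖deriv f s‖₊ : ℝ≥0∞) < ⊤ := by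
        simp_rw [← enorm_eq_nnnorm, Real.enorm_eq_ofReal_abs]
        exact lt_top_iff_ne_top.2 hF
      exact this
    have habs : IntegrableOn (fun s => |deriv f s|) (Set.Ioi r) := hInt.abs
    have bound : ∀ R, r ≤ R → |f r| ≤ |f R| + ∫ s in Set.Ioi r, |deriv f s| := by
      intro R hR
      have hivi : IntervalIntegrable (deriv f) volume r R :=
        (intervalIntegrable_iff_integrableOn_Ioc_of_le hR).2
          (hInt.mono_set Set.Ioc_subset_Ioi_self)
      have hftc : ∫ s in r..R, deriv f s = f R - f r := by
        refine intervalIntegral.integral_deriv_eq_sub (fun x hx => ?_) hivi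
        rw [Set.uIcc_of_le hR] at hx
        exact hdiff x (Set.mem_Ioi.2 (lt_of_lt_of_le hr hx.1))
      have hfr : f r = f R - ∫ s in r..R, deriv f s := by rw [hftc]; ring
      have h1 : |f r| ≤ |f R| + |∫ s in r..R, deriv f s| := by
        rw [hfr]; exact (abs_sub _ _)
      have h2 : |∫ s in r..R, deriv f s| ≤ ∫ s in r..R, |deriv f s| :=
        intervalIntegral.abs_integral_le_integral_abs hR
      have h3 : ∫ s in r..R, |deriv f s| ≤ ∫ s in Set.Ioi r, |deriv f s| := by
        rw [intervalIntegral.integral_of_le hR]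
        refine setIntegral_mono_set habs
          (Filter.Eventually.of_forall fun s => abs_nonneg _)
          (HasSubset.Subset.eventuallyLE Set.Ioc_subset_Ioi_self)
      linarith
    have habsf : Filter.Tendsto (fun R => |f R| + ∫ s in Set.Ioi r, |deriv f s|)
        Filter.atTop (nhds (0 + ∫ s in Set.Ioi r, |deriv f s|)) := by
      refine Filter.Tendsto.add ?_ tendsto_const_nhds
      simpa using hlim.abs
    have hle : |f r| ≤ ∫ s in Set.Ioi r, |deriv f s| := by
      have := ge_of_tendsto habsf (Filter.eventually_atTop.2 ⟨r, bound⟩)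
      simpa using this
    calc ENNReal.ofReal |f r| ≤ ENNReal.ofReal (∫ s in Set.Ioi r, |deriv f s|) :=
          ENNReal.ofReal_le_ofReal hle
      _ = ∫⁻ s in Set.Ioi r, g s :=
          ofReal_integral_eq_lintegral_ofReal habs
            (Filter.Eventually.of_forall fun s => abs_nonneg _)
  -- the two lintegrals
  set L₂ : ℝ≥0∞ := ∫⁻ s in Set.Ioi 0, ENNReal.ofReal (|s * deriv f s| ^ p * s) with hL2
  have hL2top : L₂ ≠ ⊤ := by
    have hfin : ∫⁻ s in Set.Ioi 0, (‖|s * deriv f s| ^ p * s‖₊ : ℝ≥0∞) < ⊤ := hint2.2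
    refine lt_top_iff_ne_top.1 (lt_of_le_of_lt ?_ hfin)
    refine lintegral_mono fun s => ?_
    rw [← enorm_eq_nnnorm, Real.enorm_eq_ofReal_abs]
    exact ENNReal.ofReal_le_ofReal (le_abs_self _)
  have key : ∫⁻ r in Set.Ioi 0, ENNReal.ofReal (|f r| ^ p * r) ≤ K * L₂ := by
    have anti : Antitone fun r : ℝ => ∫⁻ s in Set.Ioi r, g s := fun a b hab =>
      lintegral_mono' (Measure.restrict_mono (Set.Ioi_subset_Ioi hab) le_rfl) le_rfl
    calc ∫⁻ r in Set.Ioi 0, ENNReal.ofReal (|f r| ^ p * r)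
        ≤ ∫⁻ r in Set.Ioi 0, (∫⁻ s in Set.Ioi r, g s) ^ p * ENNReal.ofReal r := by
          refine setLIntegral_mono ((anti.measurable.pow_const p).mul
            ENNReal.measurable_ofReal) (fun r hr => ?_)
          rw [ENNReal.ofReal_mul (by positivity),
            ← ENNReal.ofReal_rpow_of_nonneg (abs_nonneg _) hp0.le]
          exact mul_le_mul_left (ENNReal.rpow_le_rpow (ptwise r hr) hp0.le) _
      _ ≤ K * ∫⁻ s in Set.Ioi 0, (g s * ENNReal.ofReal s) ^ p * ENNReal.ofReal s :=
          hK g hgmeas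
      _ = K * L₂ := by
          congr 1
          refine setLIntegral_congr_fun measurableSet_Ioi
            (fun s hs => ?_)
          have hs' := Set.mem_Ioi.1 hs
          rw [hg_def]
          rw [← ENNReal.ofReal_mul (abs_nonneg _)]
          rw [show |deriv f s| * s = |s * deriv f s| by
            rw [abs_mul, abs_of_pos hs', mul_comm]]
          rw [ENNReal.ofReal_rpow_of_nonneg (abs_nonneg _) hp0.le,
            ← ENNReal.ofReal_mul (by positivity)]
  -- pass to real integrals
  have hA : ∫ r in Set.Ioi (0:ℝ), |f r| ^ p * r =
      (∫⁻ r in Set.Ioi 0, ENNReal.ofReal (|f r| ^ p * r)).toReal := by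
    refine integral_eq_lintegral_of_nonneg_ae ?_ hint1.aestronglyMeasurable
    exact (ae_restrict_iff' measurableSet_Ioi).2
      (Filter.Eventually.of_forall fun r hr => by
        have := Set.mem_Ioi.1 hr; positivity)
  have hB : ∫ r in Set.Ioi (0:ℝ), |r * deriv f r| ^ p * r = L₂.toReal := by
    rw [hL2]
    refine integral_eq_lintegral_of_nonneg_ae ?_ hint2.aestronglyMeasurable
    exact (ae_restrict_iff' measurableSet_Ioi).2
      (Filter.Eventually.of_forall fun r hr => by
        have := Set.mem_Ioi.1 hr; positivity)
  rw [hA, hB]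
  have h1 : (∫⁻ r in Set.Ioi 0, ENNReal.ofReal (|f r| ^ p * r)).toReal ≤
      K.toReal * L₂.toReal := by
    rw [← ENNReal.toReal_mul]
    exact ENNReal.toReal_mono (ENNReal.mul_ne_top hKtop hL2top) key
  have hBnn : (0:ℝ) ≤ L₂.toReal := ENNReal.toReal_nonneg
  calc (∫⁻ r in Set.Ioi 0, ENNReal.ofReal (|f r| ^ p * r)).toReal ^ (1/p)
      ≤ (K.toReal * L₂.toReal) ^ (1/p) :=
        Real.rpow_le_rpow ENNReal.toReal_nonneg h1 (by positivity)
    _ = K.toReal ^ (1/p) * L₂.toReal ^ (1/p) :=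
        Real.mul_rpow ENNReal.toReal_nonneg hBnn
    _ ≤ (K.toReal + 1) ^ (1/p) * L₂.toReal ^ (1/p) := by
        have : K.toReal ^ (1/p) ≤ (K.toReal + 1) ^ (1/p) :=
          Real.rpow_le_rpow ENNReal.toReal_nonneg (by linarith) (by positivity)
        exact mul_le_mul_of_nonneg_right this (Real.rpow_nonneg hBnn _)
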